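/- Let G be a σ-p-group. Then |G| = |G⁺| · |G⁻|. -/

import Mathlib

/-- Let `G` be a `σ`-`p`-group. Then `|G| = |G⁺| · |G⁻|`. -/
theorem sigma_p_group_card_eq_card_plus_mul_card_minus
    {p : ℕ} (hp : p.Prime) (hodd : Odd p)
    {G : Type*} [Group G] [Finite G] (hG : IsPGroup p G)
    (σ : G ≃* G) (hσ : ∀ a, σ (σ a) = a) :
    Nat.card G = Nat.card {a : G // σ a = a} * Nat.card {a : G // σ a = a⁻¹} := by
  classical
  haveI : Fact p.Prime := ⟨hp⟩
  obtain ⟨n, hn⟩ := hG.exists_card_eq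
  have hoddcard : Odd (Nat.card G) := hn ▸ hodd.pow
  set H : Subgroup G :=
    { carrier := {a | σ a = a}
      mul_mem' := by intro a b ha hb; simp only [Set.mem_setOf_eq] at *; rw [map_mul, ha, hb]
      one_mem' := map_one σ
      inv_mem' := by intro a ha; simp only [Set.mem_setOf_eq] at *; rw [map_inv, ha] } with hH
  have hplus : Nat.card {a : G // σ a = a} = Nat.card H := rfl
  have hmem : ∀ a : G, σ (a * (σ a)⁻¹) = (a * (σ a)⁻¹)⁻¹ := by
    intro a; rw [map_mul, map_inv, hσ, mul_inv_rev, inv_inv]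
  let f : G → {a : G // σ a = a⁻¹} := fun a => ⟨a * (σ a)⁻¹, hmem a⟩
  have hf : ∀ a b : G, a⁻¹ * b ∈ H → f a = f b := by
    intro a b h
    have h' : (σ a)⁻¹ * σ b = a⁻¹ * b := by
      have := h
      simp only [hH, Subgroup.mem_mk, Set.mem_setOf_eq, map_mul, map_inv] at this
      exact (by have h0 : σ (a⁻¹ * b) = a⁻¹ * b := h; rwa [map_mul, map_inv] at h0)
    apply Subtype.ext
    show a * (σ a)⁻¹ = b * (σ b)⁻¹
    have : b * (σ b)⁻¹ = a * (a⁻¹ * b) * ((σ a) * ((σ a)⁻¹ * σ b))⁻¹ := by group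
    rw [this, h', mul_inv_rev]
    group
  let g : G ⧸ H → {a : G // σ a = a⁻¹} :=
    Quotient.lift f (fun a b h => hf a b (QuotientGroup.leftRel_apply.mp h))
  have ginj : Function.Injective g := by
    intro x y
    induction x using Quotient.ind
    induction y using Quotient.ind
    rename_i a b
    intro h
    have h' : a * (σ a)⁻¹ = b * (σ b)⁻¹ := congrArg Subtype.val h
    refine (QuotientGroup.eq).mpr ?_
    show σ (a⁻¹ * b) = a⁻¹ * b
    have h1 : (σ a)⁻¹ = a⁻¹ * (b * (σ b)⁻¹) := by rw [← h']; group
    rw [map_mul, map_inv, h1, mul_assoc, mul_assoc, inv_mul_cancel, mul_one]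
  have gsurj : Function.Surjective g := by
    rintro ⟨c, hc⟩
    refine ⟨QuotientGroup.mk (c ^ ((Nat.card G + 1) / 2)), ?_⟩
    have h2 : 2 * ((Nat.card G + 1) / 2) = Nat.card G + 1 := by
      obtain ⟨k, hk⟩ := hoddcard
      omega
    have hσc : σ (c ^ ((Nat.card G + 1) / 2)) = (c ^ ((Nat.card G + 1) / 2))⁻¹ := by
      rw [map_pow, hc, inv_pow]
    apply Subtype.ext
    show c ^ ((Nat.card G + 1) / 2) * (σ (c ^ ((Nat.card G + 1) / 2)))⁻¹ = c
    rw [hσc, inv_inv, ← pow_add, ← two_mul, h2, pow_succ, pow_card_eq_one', one_mul]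
  have hquot : Nat.card (G ⧸ H) = Nat.card {a : G // σ a = a⁻¹} :=
    Nat.card_eq_of_bijective g ⟨ginj, gsurj⟩
  rw [Subgroup.card_eq_card_quotient_mul_card_subgroup H, hquot, hplus, mul_comm]
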